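/- The Jordan constant of the binary octahedral group (of order 48) equals 24. -/

import Mathlib

/-- `G` satisfies the Jordan property with constant `d`: every finite subgroup `H` of `G`
contains a normal abelian subgroup of index at most `d` in `H`. -/
def IsJordanWith (G : Type*) [Group G] (d : ℕ) : Prop :=
  ∀ H : Subgroup G, Finite H →
    ∃ A : Subgroup H, A.Normal ∧ (∀ x y : A, x * y = y * x) ∧ A.index ≤ d

/-- `G` is a Jordan group. -/
def IsJordanGroup (G : Type*) [Group G] : Prop :=
  ∃ d : ℕ, 0 < d ∧ IsJordanWith G d

/-- The Jordan constant of `G`: the minimal `d > 0` witnessing the Jordan property. -/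
noncomputable def jordanConstant (G : Type*) [Group G] : ℕ :=
  sInf {d : ℕ | 0 < d ∧ IsJordanWith G d}

open Quaternion in
/-- The binary octahedral group, realized as the subgroup of the unit quaternions
generated by `(1 + i)/√2` and `(1 + i + j + k)/2`. -/
noncomputable def binaryOctahedralGroup : Subgroup (unitary (Quaternion ℝ)) :=
  Subgroup.closure
    {x : unitary (Quaternion ℝ) |
      (x : Quaternion ℝ) = ⟨Real.sqrt 2 / 2, Real.sqrt 2 / 2, 0, 0⟩ ∨
      (x : Quaternion ℝ) = ⟨1 / 2, 1 / 2, 1 / 2, 1 / 2⟩}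


structure Kz where
  a : ℤ
  b : ℤ
deriving DecidableEq

namespace Kz

@[ext] theorem ext' {x y : Kz} (ha : x.a = y.a) (hb : x.b = y.b) : x = y := by
  cases x; cases y; simp_all

instance : Zero Kz := ⟨⟨0,0⟩⟩
instance : One Kz := ⟨⟨1,0⟩⟩
instance : Add Kz := ⟨fun x y => ⟨x.a + y.a, x.b + y.b⟩⟩
instance : Neg Kz := ⟨fun x => ⟨-x.a, -x.b⟩⟩
instance : Mul Kz := ⟨fun x y => ⟨x.a*y.a + 2*x.b*y.b, x.a*y.b + x.b*y.a⟩⟩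

@[simp] lemma zero_a : (0 : Kz).a = 0 := rfl
@[simp] lemma zero_b : (0 : Kz).b = 0 := rfl
@[simp] lemma one_a : (1 : Kz).a = 1 := rfl
@[simp] lemma one_b : (1 : Kz).b = 0 := rfl
@[simp] lemma add_a (x y : Kz) : (x + y).a = x.a + y.a := rfl
@[simp] lemma add_b (x y : Kz) : (x + y).b = x.b + y.b := rfl
@[simp] lemma neg_a (x : Kz) : (-x).a = -x.a := rfl
@[simp] lemma neg_b (x : Kz) : (-x).b = -x.b := rfl
@[simp] lemma mul_a (x y : Kz) : (x * y).a = x.a*y.a + 2*x.b*y.b := rfl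
@[simp] lemma mul_b (x y : Kz) : (x * y).b = x.a*y.b + x.b*y.a := rfl

instance : CommRing Kz where
  nsmul := nsmulRec
  zsmul := zsmulRec
  add_assoc := by intros; ext <;> simp <;> ring
  zero_add := by intros; ext <;> simp
  add_zero := by intros; ext <;> simp
  add_comm := by intros; ext <;> simp <;> ring
  mul_assoc := by intros; ext <;> simp <;> ring
  one_mul := by intros; ext <;> simp
  mul_one := by intros; ext <;> simp
  left_distrib := by intros; ext <;> simp <;> ring
  right_distrib := by intros; ext <;> simp <;> ring
  zero_mul := by intros; ext <;> simp
  mul_zero := by intros; ext <;> simp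
  mul_comm := by intros; ext <;> simp <;> ring
  neg_add_cancel := by intros; ext <;> simp

noncomputable def toR : Kz →+* ℝ where
  toFun x := (x.a : ℝ) + (x.b : ℝ) * Real.sqrt 2
  map_one' := by simp
  map_zero' := by simp
  map_add' x y := by simp only [add_a, add_b]; push_cast; ring
  map_mul' x y := by
    simp only [mul_a, mul_b]
    have h2 : Real.sqrt 2 * Real.sqrt 2 = 2 := Real.mul_self_sqrt (by norm_num)
    push_cast
    linear_combination (-(↑x.b * ↑y.b) : ℝ) * h2

theorem toR_injective : Function.Injective toR := by
  intro x y h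
  simp only [toR, RingHom.coe_mk, MonoidHom.coe_mk, OneHom.coe_mk] at h
  have hb : x.b = y.b := by
    by_contra hb
    have : Real.sqrt 2 = ((x.a : ℝ) - y.a) / ((y.b : ℝ) - x.b) := by
      have : ((y.b : ℝ)) - x.b ≠ 0 := by
        intro h0
        apply hb
        have := sub_eq_zero.mp h0
        exact_mod_cast this.symm
      field_simp
      linarith
    have : Irrational (((x.a : ℝ) - y.a) / (((y.b : ℝ)) - x.b)) := this ▸ irrational_sqrt_two
    have : Irrational ((((x.a - y.a : ℤ) : ℝ)) / (((y.b - x.b : ℤ) : ℝ))) := by push_cast; exact this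
    exact (Rat.not_irrational _) (by
      have := this
      rw [show (((x.a - y.a : ℤ) : ℝ)) / (((y.b - x.b : ℤ) : ℝ)) = ((((x.a - y.a : ℤ) : ℚ) / ((y.b - x.b : ℤ) : ℚ) : ℚ) : ℝ) by push_cast; ring] at this
      exact this)
  have ha : (x.a : ℝ) = y.a := by rw [hb] at h; linarith
  exact Kz.ext' (by exact_mod_cast ha) hb

end Kz

open Quaternion

abbrev HK := QuaternionAlgebra Kz (-1) 0 (-1)

instance : DecidableEq HK := fun x y =>
  decidable_of_iff (x.re = y.re ∧ x.imI = y.imI ∧ x.imJ = y.imJ ∧ x.imK = y.imK)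
    QuaternionAlgebra.ext_iff.symm

noncomputable def fQ : HK →+* Quaternion ℝ where
  toFun q := ⟨Kz.toR q.re, Kz.toR q.imI, Kz.toR q.imJ, Kz.toR q.imK⟩
  map_one' := by ext <;> simp
  map_zero' := by ext <;> simp
  map_add' x y := by ext <;> simp <;> rfl
  map_mul' x y := by
    ext
    · refine Eq.trans ?_ (Quaternion.re_mul _ _).symm; simp; ring
    · refine Eq.trans ?_ (Quaternion.imI_mul _ _).symm; simp; ring
    · refine Eq.trans ?_ (Quaternion.imJ_mul _ _).symm; simp; ring
    · refine Eq.trans ?_ (Quaternion.imK_mul _ _).symm; simp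

theorem fQ_re (q : HK) : (fQ q).re = Kz.toR q.re := rfl
theorem fQ_imI (q : HK) : (fQ q).imI = Kz.toR q.imI := rfl
theorem fQ_imJ (q : HK) : (fQ q).imJ = Kz.toR q.imJ := rfl
theorem fQ_imK (q : HK) : (fQ q).imK = Kz.toR q.imK := rfl

theorem fQ_injective : Function.Injective fQ := by
  intro x y h
  have h1 := congrArg QuaternionAlgebra.re h
  have h2 := congrArg QuaternionAlgebra.imI h
  have h3 := congrArg QuaternionAlgebra.imJ h
  have h4 := congrArg QuaternionAlgebra.imK h
  exact QuaternionAlgebra.ext (Kz.toR_injective h1) (Kz.toR_injective h2)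
    (Kz.toR_injective h3) (Kz.toR_injective h4)

theorem fQ_star (x : HK) : fQ (star x) = star (fQ x) := by
  ext <;> simp [fQ_re, fQ_imI, fQ_imJ, fQ_imK, QuaternionAlgebra.re_star, QuaternionAlgebra.imI_star,
    QuaternionAlgebra.imJ_star, QuaternionAlgebra.imK_star]
def L2 : List HK := [
  ⟨⟨2,0⟩,⟨0,0⟩,⟨0,0⟩,⟨0,0⟩⟩,
  ⟨⟨-2,0⟩,⟨0,0⟩,⟨0,0⟩,⟨0,0⟩⟩,
  ⟨⟨0,0⟩,⟨2,0⟩,⟨0,0⟩,⟨0,0⟩⟩,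
  ⟨⟨0,0⟩,⟨-2,0⟩,⟨0,0⟩,⟨0,0⟩⟩,
  ⟨⟨0,0⟩,⟨0,0⟩,⟨2,0⟩,⟨0,0⟩⟩,
  ⟨⟨0,0⟩,⟨0,0⟩,⟨-2,0⟩,⟨0,0⟩⟩,
  ⟨⟨0,0⟩,⟨0,0⟩,⟨0,0⟩,⟨2,0⟩⟩,
  ⟨⟨0,0⟩,⟨0,0⟩,⟨0,0⟩,⟨-2,0⟩⟩,
  ⟨⟨1,0⟩,⟨1,0⟩,⟨1,0⟩,⟨1,0⟩⟩,
  ⟨⟨1,0⟩,⟨1,0⟩,⟨1,0⟩,⟨-1,0⟩⟩,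
  ⟨⟨1,0⟩,⟨1,0⟩,⟨-1,0⟩,⟨1,0⟩⟩,
  ⟨⟨1,0⟩,⟨1,0⟩,⟨-1,0⟩,⟨-1,0⟩⟩,
  ⟨⟨1,0⟩,⟨-1,0⟩,⟨1,0⟩,⟨1,0⟩⟩,
  ⟨⟨1,0⟩,⟨-1,0⟩,⟨1,0⟩,⟨-1,0⟩⟩,
  ⟨⟨1,0⟩,⟨-1,0⟩,⟨-1,0⟩,⟨1,0⟩⟩,
  ⟨⟨1,0⟩,⟨-1,0⟩,⟨-1,0⟩,⟨-1,0⟩⟩,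
  ⟨⟨-1,0⟩,⟨1,0⟩,⟨1,0⟩,⟨1,0⟩⟩,
  ⟨⟨-1,0⟩,⟨1,0⟩,⟨1,0⟩,⟨-1,0⟩⟩,
  ⟨⟨-1,0⟩,⟨1,0⟩,⟨-1,0⟩,⟨1,0⟩⟩,
  ⟨⟨-1,0⟩,⟨1,0⟩,⟨-1,0⟩,⟨-1,0⟩⟩,
  ⟨⟨-1,0⟩,⟨-1,0⟩,⟨1,0⟩,⟨1,0⟩⟩,
  ⟨⟨-1,0⟩,⟨-1,0⟩,⟨1,0⟩,⟨-1,0⟩⟩,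
  ⟨⟨-1,0⟩,⟨-1,0⟩,⟨-1,0⟩,⟨1,0⟩⟩,
  ⟨⟨-1,0⟩,⟨-1,0⟩,⟨-1,0⟩,⟨-1,0⟩⟩,
  ⟨⟨0,1⟩,⟨0,1⟩,⟨0,0⟩,⟨0,0⟩⟩,
  ⟨⟨0,1⟩,⟨0,-1⟩,⟨0,0⟩,⟨0,0⟩⟩,
  ⟨⟨0,-1⟩,⟨0,1⟩,⟨0,0⟩,⟨0,0⟩⟩,
  ⟨⟨0,-1⟩,⟨0,-1⟩,⟨0,0⟩,⟨0,0⟩⟩,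
  ⟨⟨0,1⟩,⟨0,0⟩,⟨0,1⟩,⟨0,0⟩⟩,
  ⟨⟨0,1⟩,⟨0,0⟩,⟨0,-1⟩,⟨0,0⟩⟩,
  ⟨⟨0,-1⟩,⟨0,0⟩,⟨0,1⟩,⟨0,0⟩⟩,
  ⟨⟨0,-1⟩,⟨0,0⟩,⟨0,-1⟩,⟨0,0⟩⟩,
  ⟨⟨0,1⟩,⟨0,0⟩,⟨0,0⟩,⟨0,1⟩⟩,
  ⟨⟨0,1⟩,⟨0,0⟩,⟨0,0⟩,⟨0,-1⟩⟩,
  ⟨⟨0,-1⟩,⟨0,0⟩,⟨0,0⟩,⟨0,1⟩⟩,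
  ⟨⟨0,-1⟩,⟨0,0⟩,⟨0,0⟩,⟨0,-1⟩⟩,
  ⟨⟨0,0⟩,⟨0,1⟩,⟨0,1⟩,⟨0,0⟩⟩,
  ⟨⟨0,0⟩,⟨0,1⟩,⟨0,-1⟩,⟨0,0⟩⟩,
  ⟨⟨0,0⟩,⟨0,-1⟩,⟨0,1⟩,⟨0,0⟩⟩,
  ⟨⟨0,0⟩,⟨0,-1⟩,⟨0,-1⟩,⟨0,0⟩⟩,
  ⟨⟨0,0⟩,⟨0,1⟩,⟨0,0⟩,⟨0,1⟩⟩,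
  ⟨⟨0,0⟩,⟨0,1⟩,⟨0,0⟩,⟨0,-1⟩⟩,
  ⟨⟨0,0⟩,⟨0,-1⟩,⟨0,0⟩,⟨0,1⟩⟩,
  ⟨⟨0,0⟩,⟨0,-1⟩,⟨0,0⟩,⟨0,-1⟩⟩,
  ⟨⟨0,0⟩,⟨0,0⟩,⟨0,1⟩,⟨0,1⟩⟩,
  ⟨⟨0,0⟩,⟨0,0⟩,⟨0,1⟩,⟨0,-1⟩⟩,
  ⟨⟨0,0⟩,⟨0,0⟩,⟨0,-1⟩,⟨0,1⟩⟩,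
  ⟨⟨0,0⟩,⟨0,0⟩,⟨0,-1⟩,⟨0,-1⟩⟩]

def halfK (x : Kz) : Kz := ⟨x.a / 2, x.b / 2⟩
def halfH (q : HK) : HK := ⟨halfK q.re, halfK q.imI, halfK q.imJ, halfK q.imK⟩

-- generators (doubled)
def s2 : HK := ⟨⟨0,1⟩,⟨0,1⟩,⟨0,0⟩,⟨0,0⟩⟩
def t2 : HK := ⟨⟨1,0⟩,⟨1,0⟩,⟨1,0⟩,⟨1,0⟩⟩
def two2 : HK := ⟨⟨2,0⟩,⟨0,0⟩,⟨0,0⟩,⟨0,0⟩⟩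
def negtwo2 : HK := ⟨⟨-2,0⟩,⟨0,0⟩,⟨0,0⟩,⟨0,0⟩⟩

theorem hs2 : s2 ∈ L2 := by decide
theorem ht2 : t2 ∈ L2 := by decide
theorem htwo2 : two2 ∈ L2 := by decide
theorem hnegtwo2 : negtwo2 ∈ L2 := by decide

def four2 : HK := ⟨⟨4,0⟩,⟨0,0⟩,⟨0,0⟩,⟨0,0⟩⟩

set_option maxRecDepth 10000 in
theorem hcolS : ∀ x ∈ L2, halfH (x * s2) ∈ L2 ∧ x * s2 = two2 * halfH (x * s2) := by decide

set_option maxRecDepth 10000 in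
theorem hcolT : ∀ x ∈ L2, halfH (x * t2) ∈ L2 ∧ x * t2 = two2 * halfH (x * t2) := by decide

set_option maxRecDepth 10000 in
theorem hstarL : ∀ x ∈ L2, star x ∈ L2 ∧ star x * x = two2 * two2 ∧ x * star x = two2 * two2 := by
  decide

set_option maxRecDepth 10000 in
set_option maxHeartbeats 2000000 in
theorem hKEY : ∀ x ∈ L2, x = two2 ∨ x = negtwo2 ∨
    ∃ g ∈ L2, g * x * star g * x ≠ x * (g * x * star g) := by decide

theorem hcard : L2.toFinset.card = 48 := by decide

noncomputable def uQ (x : HK) : Quaternion ℝ := (2:ℝ)⁻¹ • fQ x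

theorem fQ_two2 : fQ two2 = (2:ℝ) • (1 : Quaternion ℝ) := by
  ext <;> simp [fQ_re, fQ_imI, fQ_imJ, fQ_imK, two2, Kz.toR] <;> norm_num

theorem uQ_two2 : uQ two2 = 1 := by
  rw [uQ, fQ_two2, smul_smul]; norm_num

theorem uQ_negtwo2 : uQ negtwo2 = -1 := by
  have : fQ negtwo2 = (-2:ℝ) • (1 : Quaternion ℝ) := by
    ext <;> simp [fQ_re, fQ_imI, fQ_imJ, fQ_imK, negtwo2, Kz.toR] <;> norm_num
  rw [uQ, this, smul_smul]; norm_num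

theorem uQ_injective : Function.Injective uQ := by
  intro x y h
  exact fQ_injective (smul_right_injective (Quaternion ℝ) (by norm_num : (2:ℝ)⁻¹ ≠ 0) h)

theorem uQ_mul {x y z : HK} (h : x * y = two2 * z) : uQ x * uQ y = uQ z := by
  have : uQ x * uQ y = ((2:ℝ)⁻¹ * (2:ℝ)⁻¹) • (fQ x * fQ y) := by
    rw [uQ, uQ, smul_mul_assoc, mul_smul_comm, smul_smul]
  rw [this, ← map_mul, h, map_mul, fQ_two2, smul_mul_assoc, one_mul, smul_smul]
  norm_num [uQ]

theorem uQ_star (x : HK) : uQ (star x) = star (uQ x) := by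
  rw [uQ, uQ, fQ_star, Quaternion.star_smul]

theorem uQ_unitary {x : HK} (hx : x ∈ L2) : uQ x ∈ unitary (Quaternion ℝ) := by
  have h := hstarL x hx
  constructor
  · rw [← uQ_star, uQ_mul h.2.1, uQ_two2]
  · rw [← uQ_star, uQ_mul h.2.2, uQ_two2]

noncomputable def mkU (x : HK) (hx : x ∈ L2) : unitary (Quaternion ℝ) := ⟨uQ x, uQ_unitary hx⟩

theorem mkU_mul {x y z : HK} (hx : x ∈ L2) (hy : y ∈ L2) (hz : z ∈ L2)
    (h : x * y = two2 * z) : mkU x hx * mkU y hy = mkU z hz :=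
  Subtype.ext (uQ_mul h)

/-- the target set -/
def TS : Set (unitary (Quaternion ℝ)) := {w | ∃ x, ∃ hx : x ∈ L2, w = mkU x hx}

theorem TS_finite : TS.Finite := by
  have : Finite {x : HK // x ∈ L2} := by
    exact Finite.of_injective (fun p => (⟨p.1, List.mem_toFinset.2 p.2⟩ : ↥L2.toFinset))
      (fun p q h => Subtype.ext (by simpa using congrArg Subtype.val h))
  have : TS ⊆ Set.range (fun p : {x : HK // x ∈ L2} => mkU p.1 p.2) := by
    rintro w ⟨x, hx, rfl⟩; exact ⟨⟨x, hx⟩, rfl⟩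
  exact (Set.finite_range _).subset this

theorem one_mem_TS : (1 : unitary (Quaternion ℝ)) ∈ TS :=
  ⟨two2, htwo2, Subtype.ext uQ_two2.symm⟩

theorem TS_mul_s {v : unitary (Quaternion ℝ)} (hv : v ∈ TS) :
    v * mkU s2 hs2 ∈ TS := by
  obtain ⟨x, hx, rfl⟩ := hv
  obtain ⟨hm, he⟩ := hcolS x hx
  exact ⟨_, hm, (mkU_mul hx hs2 hm he)⟩

theorem TS_mul_t {v : unitary (Quaternion ℝ)} (hv : v ∈ TS) :
    v * mkU t2 ht2 ∈ TS := by
  obtain ⟨x, hx, rfl⟩ := hv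
  obtain ⟨hm, he⟩ := hcolT x hx
  exact ⟨_, hm, (mkU_mul hx ht2 hm he)⟩


theorem uQ_s2 : uQ s2 = (⟨Real.sqrt 2 / 2, Real.sqrt 2 / 2, 0, 0⟩ : Quaternion ℝ) := by
  ext <;> simp [uQ, fQ_re, fQ_imI, fQ_imJ, fQ_imK, s2, Kz.toR] <;> ring

theorem uQ_t2 : uQ t2 = (⟨1/2, 1/2, 1/2, 1/2⟩ : Quaternion ℝ) := by
  ext <;> simp [uQ, fQ_re, fQ_imI, fQ_imJ, fQ_imK, t2, Kz.toR] <;> norm_num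

theorem hsB : mkU s2 hs2 ∈ binaryOctahedralGroup :=
  Subgroup.subset_closure (Or.inl uQ_s2)

theorem htB : mkU t2 ht2 ∈ binaryOctahedralGroup :=
  Subgroup.subset_closure (Or.inr uQ_t2)

/-- stabilizer of TS under right multiplication -/
noncomputable def RS : Subgroup (unitary (Quaternion ℝ)) where
  carrier := {w | ∀ v ∈ TS, v * w ∈ TS}
  one_mem' := by intro v hv; simpa using hv
  mul_mem' := by
    intro a b ha hb v hv
    rw [← mul_assoc]
    exact hb _ (ha v hv)
  inv_mem' := by
    intro w hw v hv
    have : Finite ↥TS := TS_finite.to_subtype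
    have hinj : Function.Injective (fun p : ↥TS => (⟨p.1 * w, hw p.1 p.2⟩ : ↥TS)) := by
      intro p q h
      have h' : p.1 * w = q.1 * w := by simpa using congrArg Subtype.val h
      exact Subtype.ext (mul_right_cancel h')
    obtain ⟨v', hv'⟩ := (Finite.injective_iff_surjective.mp hinj) ⟨v, hv⟩
    have : v'.1 * w = v := by simpa using congrArg Subtype.val hv'
    have : v * w⁻¹ = v'.1 := by rw [← this]; group
    rw [this]; exact v'.2

theorem B_subset_TS : ∀ w ∈ binaryOctahedralGroup, w ∈ TS := by
  intro w hw
  have hR : binaryOctahedralGroup ≤ RS := by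
    apply (Subgroup.closure_le _).mpr
    rintro x (hx | hx)
    · have : x = mkU s2 hs2 := Subtype.ext (hx.trans uQ_s2.symm)
      subst this
      exact fun v hv => TS_mul_s hv
    · have : x = mkU t2 ht2 := Subtype.ext (hx.trans uQ_t2.symm)
      subst this
      exact fun v hv => TS_mul_t hv
  have h1 : ∀ v ∈ TS, v * w ∈ TS := hR hw
  simpa using h1 1 one_mem_TS
set_option maxHeartbeats 1600000 in
theorem memB : ∀ (x : HK) (hx : x ∈ L2), mkU x hx ∈ binaryOctahedralGroup := by
  have m0 : L2[0] ∈ L2 := by decide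
  have h0 : mkU L2[0] m0 ∈ binaryOctahedralGroup := by
    have e : mkU L2[0] m0 = 1 := Subtype.ext uQ_two2
    rw [e]; exact Subgroup.one_mem _
  have m24 : L2[24] ∈ L2 := by decide
  have h24 : mkU L2[24] m24 ∈ binaryOctahedralGroup := by
    have e : mkU L2[0] m0 * mkU s2 hs2 = mkU L2[24] m24 := mkU_mul m0 hs2 m24 (by decide)
    exact e ▸ Subgroup.mul_mem _ h0 hsB
  have m8 : L2[8] ∈ L2 := by decide
  have h8 : mkU L2[8] m8 ∈ binaryOctahedralGroup := by
    have e : mkU L2[0] m0 * mkU t2 ht2 = mkU L2[8] m8 := mkU_mul m0 ht2 m8 (by decide)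
    exact e ▸ Subgroup.mul_mem _ h0 htB
  have m2 : L2[2] ∈ L2 := by decide
  have h2 : mkU L2[2] m2 ∈ binaryOctahedralGroup := by
    have e : mkU L2[24] m24 * mkU s2 hs2 = mkU L2[2] m2 := mkU_mul m24 hs2 m2 (by decide)
    exact e ▸ Subgroup.mul_mem _ h24 hsB
  have m40 : L2[40] ∈ L2 := by decide
  have h40 : mkU L2[40] m40 ∈ binaryOctahedralGroup := by
    have e : mkU L2[24] m24 * mkU t2 ht2 = mkU L2[40] m40 := mkU_mul m24 ht2 m40 (by decide)
    exact e ▸ Subgroup.mul_mem _ h24 htB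
  have m36 : L2[36] ∈ L2 := by decide
  have h36 : mkU L2[36] m36 ∈ binaryOctahedralGroup := by
    have e : mkU L2[8] m8 * mkU s2 hs2 = mkU L2[36] m36 := mkU_mul m8 hs2 m36 (by decide)
    exact e ▸ Subgroup.mul_mem _ h8 hsB
  have m16 : L2[16] ∈ L2 := by decide
  have h16 : mkU L2[16] m16 ∈ binaryOctahedralGroup := by
    have e : mkU L2[8] m8 * mkU t2 ht2 = mkU L2[16] m16 := mkU_mul m8 ht2 m16 (by decide)
    exact e ▸ Subgroup.mul_mem _ h8 htB
  have m26 : L2[26] ∈ L2 := by decide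
  have h26 : mkU L2[26] m26 ∈ binaryOctahedralGroup := by
    have e : mkU L2[2] m2 * mkU s2 hs2 = mkU L2[26] m26 := mkU_mul m2 hs2 m26 (by decide)
    exact e ▸ Subgroup.mul_mem _ h2 hsB
  have m18 : L2[18] ∈ L2 := by decide
  have h18 : mkU L2[18] m18 ∈ binaryOctahedralGroup := by
    have e : mkU L2[2] m2 * mkU t2 ht2 = mkU L2[18] m18 := mkU_mul m2 ht2 m18 (by decide)
    exact e ▸ Subgroup.mul_mem _ h2 htB
  have m34 : L2[34] ∈ L2 := by decide
  have h34 : mkU L2[34] m34 ∈ binaryOctahedralGroup := by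
    have e : mkU L2[40] m40 * mkU t2 ht2 = mkU L2[34] m34 := mkU_mul m40 ht2 m34 (by decide)
    exact e ▸ Subgroup.mul_mem _ h40 htB
  have m17 : L2[17] ∈ L2 := by decide
  have h17 : mkU L2[17] m17 ∈ binaryOctahedralGroup := by
    have e : mkU L2[36] m36 * mkU s2 hs2 = mkU L2[17] m17 := mkU_mul m36 hs2 m17 (by decide)
    exact e ▸ Subgroup.mul_mem _ h36 hsB
  have m30 : L2[30] ∈ L2 := by decide
  have h30 : mkU L2[30] m30 ∈ binaryOctahedralGroup := by
    have e : mkU L2[16] m16 * mkU s2 hs2 = mkU L2[30] m30 := mkU_mul m16 hs2 m30 (by decide)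
    exact e ▸ Subgroup.mul_mem _ h16 hsB
  have m1 : L2[1] ∈ L2 := by decide
  have h1 : mkU L2[1] m1 ∈ binaryOctahedralGroup := by
    have e : mkU L2[16] m16 * mkU t2 ht2 = mkU L2[1] m1 := mkU_mul m16 ht2 m1 (by decide)
    exact e ▸ Subgroup.mul_mem _ h16 htB
  have m31 : L2[31] ∈ L2 := by decide
  have h31 : mkU L2[31] m31 ∈ binaryOctahedralGroup := by
    have e : mkU L2[26] m26 * mkU t2 ht2 = mkU L2[31] m31 := mkU_mul m26 ht2 m31 (by decide)
    exact e ▸ Subgroup.mul_mem _ h26 htB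
  have m22 : L2[22] ∈ L2 := by decide
  have h22 : mkU L2[22] m22 ∈ binaryOctahedralGroup := by
    have e : mkU L2[18] m18 * mkU t2 ht2 = mkU L2[22] m22 := mkU_mul m18 ht2 m22 (by decide)
    exact e ▸ Subgroup.mul_mem _ h18 htB
  have m20 : L2[20] ∈ L2 := by decide
  have h20 : mkU L2[20] m20 ∈ binaryOctahedralGroup := by
    have e : mkU L2[34] m34 * mkU s2 hs2 = mkU L2[20] m20 := mkU_mul m34 hs2 m20 (by decide)
    exact e ▸ Subgroup.mul_mem _ h34 hsB
  have m27 : L2[27] ∈ L2 := by decide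
  have h27 : mkU L2[27] m27 ∈ binaryOctahedralGroup := by
    have e : mkU L2[34] m34 * mkU t2 ht2 = mkU L2[27] m27 := mkU_mul m34 ht2 m27 (by decide)
    exact e ▸ Subgroup.mul_mem _ h34 htB
  have m35 : L2[35] ∈ L2 := by decide
  have h35 : mkU L2[35] m35 ∈ binaryOctahedralGroup := by
    have e : mkU L2[17] m17 * mkU s2 hs2 = mkU L2[35] m35 := mkU_mul m17 hs2 m35 (by decide)
    exact e ▸ Subgroup.mul_mem _ h17 hsB
  have m19 : L2[19] ∈ L2 := by decide
  have h19 : mkU L2[19] m19 ∈ binaryOctahedralGroup := by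
    have e : mkU L2[17] m17 * mkU t2 ht2 = mkU L2[19] m19 := mkU_mul m17 ht2 m19 (by decide)
    exact e ▸ Subgroup.mul_mem _ h17 htB
  have m21 : L2[21] ∈ L2 := by decide
  have h21 : mkU L2[21] m21 ∈ binaryOctahedralGroup := by
    have e : mkU L2[30] m30 * mkU s2 hs2 = mkU L2[21] m21 := mkU_mul m30 hs2 m21 (by decide)
    exact e ▸ Subgroup.mul_mem _ h30 hsB
  have m23 : L2[23] ∈ L2 := by decide
  have h23 : mkU L2[23] m23 ∈ binaryOctahedralGroup := by
    have e : mkU L2[1] m1 * mkU t2 ht2 = mkU L2[23] m23 := mkU_mul m1 ht2 m23 (by decide)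
    exact e ▸ Subgroup.mul_mem _ h1 htB
  have m39 : L2[39] ∈ L2 := by decide
  have h39 : mkU L2[39] m39 ∈ binaryOctahedralGroup := by
    have e : mkU L2[31] m31 * mkU t2 ht2 = mkU L2[39] m39 := mkU_mul m31 ht2 m39 (by decide)
    exact e ▸ Subgroup.mul_mem _ h31 htB
  have m42 : L2[42] ∈ L2 := by decide
  have h42 : mkU L2[42] m42 ∈ binaryOctahedralGroup := by
    have e : mkU L2[22] m22 * mkU s2 hs2 = mkU L2[42] m42 := mkU_mul m22 hs2 m42 (by decide)
    exact e ▸ Subgroup.mul_mem _ h22 hsB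
  have m3 : L2[3] ∈ L2 := by decide
  have h3 : mkU L2[3] m3 ∈ binaryOctahedralGroup := by
    have e : mkU L2[22] m22 * mkU t2 ht2 = mkU L2[3] m3 := mkU_mul m22 ht2 m3 (by decide)
    exact e ▸ Subgroup.mul_mem _ h22 htB
  have m38 : L2[38] ∈ L2 := by decide
  have h38 : mkU L2[38] m38 ∈ binaryOctahedralGroup := by
    have e : mkU L2[20] m20 * mkU s2 hs2 = mkU L2[38] m38 := mkU_mul m20 hs2 m38 (by decide)
    exact e ▸ Subgroup.mul_mem _ h20 hsB
  have m43 : L2[43] ∈ L2 := by decide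
  have h43 : mkU L2[43] m43 ∈ binaryOctahedralGroup := by
    have e : mkU L2[27] m27 * mkU t2 ht2 = mkU L2[43] m43 := mkU_mul m27 ht2 m43 (by decide)
    exact e ▸ Subgroup.mul_mem _ h27 htB
  have m47 : L2[47] ∈ L2 := by decide
  have h47 : mkU L2[47] m47 ∈ binaryOctahedralGroup := by
    have e : mkU L2[35] m35 * mkU t2 ht2 = mkU L2[47] m47 := mkU_mul m35 ht2 m47 (by decide)
    exact e ▸ Subgroup.mul_mem _ h35 htB
  have m5 : L2[5] ∈ L2 := by decide
  have h5 : mkU L2[5] m5 ∈ binaryOctahedralGroup := by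
    have e : mkU L2[19] m19 * mkU t2 ht2 = mkU L2[5] m5 := mkU_mul m19 ht2 m5 (by decide)
    exact e ▸ Subgroup.mul_mem _ h19 htB
  have m7 : L2[7] ∈ L2 := by decide
  have h7 : mkU L2[7] m7 ∈ binaryOctahedralGroup := by
    have e : mkU L2[21] m21 * mkU t2 ht2 = mkU L2[7] m7 := mkU_mul m21 ht2 m7 (by decide)
    exact e ▸ Subgroup.mul_mem _ h21 htB
  have m15 : L2[15] ∈ L2 := by decide
  have h15 : mkU L2[15] m15 ∈ binaryOctahedralGroup := by
    have e : mkU L2[23] m23 * mkU t2 ht2 = mkU L2[15] m15 := mkU_mul m23 ht2 m15 (by decide)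
    exact e ▸ Subgroup.mul_mem _ h23 htB
  have m14 : L2[14] ∈ L2 := by decide
  have h14 : mkU L2[14] m14 ∈ binaryOctahedralGroup := by
    have e : mkU L2[39] m39 * mkU s2 hs2 = mkU L2[14] m14 := mkU_mul m39 hs2 m14 (by decide)
    exact e ▸ Subgroup.mul_mem _ h39 hsB
  have m25 : L2[25] ∈ L2 := by decide
  have h25 : mkU L2[25] m25 ∈ binaryOctahedralGroup := by
    have e : mkU L2[39] m39 * mkU t2 ht2 = mkU L2[25] m25 := mkU_mul m39 ht2 m25 (by decide)
    exact e ▸ Subgroup.mul_mem _ h39 htB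
  have m12 : L2[12] ∈ L2 := by decide
  have h12 : mkU L2[12] m12 ∈ binaryOctahedralGroup := by
    have e : mkU L2[42] m42 * mkU s2 hs2 = mkU L2[12] m12 := mkU_mul m42 hs2 m12 (by decide)
    exact e ▸ Subgroup.mul_mem _ h42 hsB
  have m13 : L2[13] ∈ L2 := by decide
  have h13 : mkU L2[13] m13 ∈ binaryOctahedralGroup := by
    have e : mkU L2[3] m3 * mkU t2 ht2 = mkU L2[13] m13 := mkU_mul m3 ht2 m13 (by decide)
    exact e ▸ Subgroup.mul_mem _ h3 htB
  have m45 : L2[45] ∈ L2 := by decide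
  have h45 : mkU L2[45] m45 ∈ binaryOctahedralGroup := by
    have e : mkU L2[38] m38 * mkU t2 ht2 = mkU L2[45] m45 := mkU_mul m38 ht2 m45 (by decide)
    exact e ▸ Subgroup.mul_mem _ h38 htB
  have m33 : L2[33] ∈ L2 := by decide
  have h33 : mkU L2[33] m33 ∈ binaryOctahedralGroup := by
    have e : mkU L2[43] m43 * mkU t2 ht2 = mkU L2[33] m33 := mkU_mul m43 ht2 m33 (by decide)
    exact e ▸ Subgroup.mul_mem _ h43 htB
  have m29 : L2[29] ∈ L2 := by decide
  have h29 : mkU L2[29] m29 ∈ binaryOctahedralGroup := by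
    have e : mkU L2[47] m47 * mkU t2 ht2 = mkU L2[29] m29 := mkU_mul m47 ht2 m29 (by decide)
    exact e ▸ Subgroup.mul_mem _ h47 htB
  have m46 : L2[46] ∈ L2 := by decide
  have h46 : mkU L2[46] m46 ∈ binaryOctahedralGroup := by
    have e : mkU L2[5] m5 * mkU s2 hs2 = mkU L2[46] m46 := mkU_mul m5 hs2 m46 (by decide)
    exact e ▸ Subgroup.mul_mem _ h5 hsB
  have m11 : L2[11] ∈ L2 := by decide
  have h11 : mkU L2[11] m11 ∈ binaryOctahedralGroup := by
    have e : mkU L2[7] m7 * mkU t2 ht2 = mkU L2[11] m11 := mkU_mul m7 ht2 m11 (by decide)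
    exact e ▸ Subgroup.mul_mem _ h7 htB
  have m32 : L2[32] ∈ L2 := by decide
  have h32 : mkU L2[32] m32 ∈ binaryOctahedralGroup := by
    have e : mkU L2[14] m14 * mkU s2 hs2 = mkU L2[32] m32 := mkU_mul m14 hs2 m32 (by decide)
    exact e ▸ Subgroup.mul_mem _ h14 hsB
  have m28 : L2[28] ∈ L2 := by decide
  have h28 : mkU L2[28] m28 ∈ binaryOctahedralGroup := by
    have e : mkU L2[25] m25 * mkU t2 ht2 = mkU L2[28] m28 := mkU_mul m25 ht2 m28 (by decide)
    exact e ▸ Subgroup.mul_mem _ h25 htB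
  have m4 : L2[4] ∈ L2 := by decide
  have h4 : mkU L2[4] m4 ∈ binaryOctahedralGroup := by
    have e : mkU L2[12] m12 * mkU t2 ht2 = mkU L2[4] m4 := mkU_mul m12 ht2 m4 (by decide)
    exact e ▸ Subgroup.mul_mem _ h12 htB
  have m9 : L2[9] ∈ L2 := by decide
  have h9 : mkU L2[9] m9 ∈ binaryOctahedralGroup := by
    have e : mkU L2[13] m13 * mkU t2 ht2 = mkU L2[9] m9 := mkU_mul m13 ht2 m9 (by decide)
    exact e ▸ Subgroup.mul_mem _ h13 htB
  have m41 : L2[41] ∈ L2 := by decide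
  have h41 : mkU L2[41] m41 ∈ binaryOctahedralGroup := by
    have e : mkU L2[45] m45 * mkU t2 ht2 = mkU L2[41] m41 := mkU_mul m45 ht2 m41 (by decide)
    exact e ▸ Subgroup.mul_mem _ h45 htB
  have m10 : L2[10] ∈ L2 := by decide
  have h10 : mkU L2[10] m10 ∈ binaryOctahedralGroup := by
    have e : mkU L2[29] m29 * mkU s2 hs2 = mkU L2[10] m10 := mkU_mul m29 hs2 m10 (by decide)
    exact e ▸ Subgroup.mul_mem _ h29 hsB
  have m6 : L2[6] ∈ L2 := by decide
  have h6 : mkU L2[6] m6 ∈ binaryOctahedralGroup := by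
    have e : mkU L2[46] m46 * mkU s2 hs2 = mkU L2[6] m6 := mkU_mul m46 hs2 m6 (by decide)
    exact e ▸ Subgroup.mul_mem _ h46 hsB
  have m37 : L2[37] ∈ L2 := by decide
  have h37 : mkU L2[37] m37 ∈ binaryOctahedralGroup := by
    have e : mkU L2[11] m11 * mkU s2 hs2 = mkU L2[37] m37 := mkU_mul m11 hs2 m37 (by decide)
    exact e ▸ Subgroup.mul_mem _ h11 hsB
  have m44 : L2[44] ∈ L2 := by decide
  have h44 : mkU L2[44] m44 ∈ binaryOctahedralGroup := by
    have e : mkU L2[32] m32 * mkU t2 ht2 = mkU L2[44] m44 := mkU_mul m32 ht2 m44 (by decide)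
    exact e ▸ Subgroup.mul_mem _ h32 htB
  intro x hx
  simp only [L2, List.mem_cons, List.not_mem_nil, or_false] at hx
  rcases hx with rfl|rfl|rfl|rfl|rfl|rfl|rfl|rfl|rfl|rfl|rfl|rfl|rfl|rfl|rfl|rfl|rfl|rfl|rfl|rfl|rfl|rfl|rfl|rfl|rfl|rfl|rfl|rfl|rfl|rfl|rfl|rfl|rfl|rfl|rfl|rfl|rfl|rfl|rfl|rfl|rfl|rfl|rfl|rfl|rfl|rfl|rfl|rfl
  · exact h0
  · exact h1
  · exact h2
  · exact h3
  · exact h4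
  · exact h5
  · exact h6
  · exact h7
  · exact h8
  · exact h9
  · exact h10
  · exact h11
  · exact h12
  · exact h13
  · exact h14
  · exact h15
  · exact h16
  · exact h17
  · exact h18
  · exact h19
  · exact h20
  · exact h21
  · exact h22
  · exact h23
  · exact h24
  · exact h25
  · exact h26
  · exact h27
  · exact h28
  · exact h29
  · exact h30
  · exact h31
  · exact h32
  · exact h33
  · exact h34
  · exact h35
  · exact h36
  · exact h37
  · exact h38
  · exact h39
  · exact h40
  · exact h41
  · exact h42
  · exact h43
  · exact h44
  · exact h45
  · exact h46
  · exact h47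

theorem TS_subset_B : ∀ w ∈ TS, w ∈ binaryOctahedralGroup := by
  rintro w ⟨x, hx, rfl⟩
  exact memB x hx

theorem mkU_injective : ∀ {x y : HK} (hx : x ∈ L2) (hy : y ∈ L2),
    mkU x hx = mkU y hy → x = y := by
  intro x y hx hy h
  exact uQ_injective (by simpa [mkU] using congrArg Subtype.val h)

noncomputable def eTS : {x : HK // x ∈ L2} ≃ ↥TS :=
  Equiv.ofBijective (fun p => ⟨mkU p.1 p.2, ⟨p.1, p.2, rfl⟩⟩)
    ⟨fun p q h => Subtype.ext (mkU_injective p.2 q.2 (by simpa using congrArg Subtype.val h)),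
     by rintro ⟨w, x, hx, rfl⟩; exact ⟨⟨x, hx⟩, rfl⟩⟩

noncomputable def eL2 : {x : HK // x ∈ L2} ≃ ↥L2.toFinset :=
  Equiv.subtypeEquivRight (fun x => (List.mem_toFinset).symm)

theorem card_B : Nat.card binaryOctahedralGroup = 48 := by
  have hset : (binaryOctahedralGroup : Set (unitary (Quaternion ℝ))) = TS :=
    Set.Subset.antisymm B_subset_TS TS_subset_B
  have e1 : ↥binaryOctahedralGroup ≃ ↥TS := Equiv.setCongr hset
  rw [Nat.card_congr e1, ← Nat.card_congr eTS, Nat.card_congr eL2,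
    Nat.card_eq_fintype_card, Fintype.card_coe, hcard]


abbrev BO := ↥binaryOctahedralGroup

instance finB : Finite BO :=
  (Nat.card_pos_iff.mp (by rw [card_B]; norm_num)).2

noncomputable def zB : BO := ⟨mkU negtwo2 hnegtwo2, memB negtwo2 hnegtwo2⟩

theorem zB_val : ((zB : unitary (Quaternion ℝ)) : Quaternion ℝ) = -1 := uQ_negtwo2

theorem zB_central (g : BO) : g * zB = zB * g := by
  apply Subtype.ext
  apply Subtype.ext
  show ((g : unitary (Quaternion ℝ)) : Quaternion ℝ) * ((zB : unitary (Quaternion ℝ)) : Quaternion ℝ)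
      = ((zB : unitary (Quaternion ℝ)) : Quaternion ℝ) * ((g : unitary (Quaternion ℝ)) : Quaternion ℝ)
  rw [zB_val, mul_neg_one, neg_one_mul]

theorem zB_ne_one : zB ≠ 1 := by
  intro h
  have h2 : ((zB : unitary (Quaternion ℝ)) : Quaternion ℝ) = 1 := by rw [h]; rfl
  rw [zB_val] at h2
  have := congrArg QuaternionAlgebra.re h2
  norm_num at this

theorem upper : IsJordanWith BO 24 := by
  intro H _
  have hdvd : Nat.card H ∣ 48 := card_B ▸ Subgroup.card_subgroup_dvd_card H
  have hcases : ∀ n ∈ Nat.divisors 48, n = 48 ∨ n ≤ 24 := by decide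
  have hpos : Nat.card H ≠ 0 := Nat.card_ne_zero.mpr ⟨⟨1⟩, ‹Finite H›⟩
  rcases hcases _ (Nat.mem_divisors.mpr ⟨hdvd, by norm_num⟩) with h48 | hle
  · -- H = ⊤, use the center
    have hHtop : H = ⊤ := Subgroup.eq_top_of_card_eq H (by rw [h48, card_B])
    have hzmem : zB ∈ H := hHtop ▸ Subgroup.mem_top zB
    have hzH : (⟨zB, hzmem⟩ : H) ∈ Subgroup.center H :=
      Subgroup.mem_center_iff.mpr (fun g => Subtype.ext (zB_central g.1))
    have hne1 : (⟨zB, hzmem⟩ : H) ≠ 1 := fun h => zB_ne_one (congrArg Subtype.val h)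
    have hnt : Nontrivial ↥(Subgroup.center H) :=
      ⟨⟨⟨_, hzH⟩, 1, fun h => hne1 (congrArg Subtype.val h)⟩⟩
    have h2 : 1 < Nat.card ↥(Subgroup.center H) :=
      Finite.one_lt_card_iff_nontrivial.mpr hnt
    have hmi := Subgroup.card_mul_index (Subgroup.center H)
    rw [h48] at hmi
    have hmul := Nat.mul_le_mul_right (Subgroup.center H).index h2
    refine ⟨Subgroup.center H, inferInstance,
      fun x y => Subtype.ext (Subgroup.mem_center_iff.mp y.2 x.1), ?_⟩
    omega
  · exact ⟨⊥, inferInstance, fun x y => Subtype.ext (by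
      have hx := Subgroup.mem_bot.mp x.2
      have hy := Subgroup.mem_bot.mp y.2
      show (x.1 * y.1 : H) = y.1 * x.1
      rw [hx, hy]), by rw [Subgroup.index_bot]; exact hle⟩

theorem uQ_mul_raw (x y : HK) : uQ x * uQ y = (2:ℝ)⁻¹ • uQ (x * y) := by
  rw [uQ, uQ, uQ, smul_mul_assoc, mul_smul_comm, smul_smul, smul_smul, ← map_mul]

theorem smul8 (p q : Quaternion ℝ) (h : ((8:ℝ)⁻¹) • p = ((8:ℝ)⁻¹) • q) : p = q :=
  smul_right_injective (Quaternion ℝ) (by norm_num : ((8:ℝ)⁻¹) ≠ 0) h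

noncomputable def qval (w : BO) : Quaternion ℝ := ((w : unitary (Quaternion ℝ)) : Quaternion ℝ)

theorem lower : ∀ d : ℕ, 0 < d → IsJordanWith BO d → 24 ≤ d := by
  intro d _ hJ
  by_contra hlt
  push_neg at hlt
  obtain ⟨A, hnorm, habel, hidx⟩ := hJ ⊤ inferInstance
  have hct : Nat.card ↥(⊤ : Subgroup BO) = 48 := by
    rw [Nat.card_congr Subgroup.topEquiv.toEquiv, card_B]
  have hmi := Subgroup.card_mul_index A
  rw [hct] at hmi
  have hc3 : 3 ≤ Nat.card ↥A := by
    by_contra hc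
    push_neg at hc
    have h012 : Nat.card ↥A = 0 ∨ Nat.card ↥A = 1 ∨ Nat.card ↥A = 2 := by omega
    rcases h012 with h | h | h <;> rw [h] at hmi <;> omega
  -- find an element of A whose quaternion value is not ±1
  have hex : ∃ w : ↥A, ¬(qval w.1.1 = 1 ∨ qval w.1.1 = -1) := by
    by_contra hall
    push_neg at hall
    have hfin : Finite ↥({1, -1} : Set (Quaternion ℝ)) :=
      ((Set.finite_singleton (-1 : Quaternion ℝ)).insert 1).to_subtype
    have hinj : Function.Injective
        (fun w : ↥A => (⟨qval w.1.1,
          by rcases hall w with h | h <;> simp [h]⟩ : ↥({1, -1} : Set (Quaternion ℝ)))) := by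
      intro p q h
      have h1 := congrArg Subtype.val h
      exact Subtype.ext (Subtype.ext (Subtype.ext (Subtype.ext h1)))
    have hle2 : Nat.card ↥A ≤ Nat.card ↥({1, -1} : Set (Quaternion ℝ)) :=
      Nat.card_le_card_of_injective _ hinj
    have hle2' : Nat.card ↥({1, -1} : Set (Quaternion ℝ)) ≤ 2 := by
      rw [Nat.card_coe_set_eq]
      exact (Set.ncard_insert_le _ _).trans (by simp [Set.ncard_singleton])
    omega
  obtain ⟨w, hw⟩ := hex
  push_neg at hw
  obtain ⟨x, hx, hvx⟩ := B_subset_TS w.1.1 w.1.1.2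
  have hvq : qval w.1.1 = uQ x := congrArg Subtype.val hvx
  have hx1 : x ≠ two2 := by
    intro h; exact hw.1 (by rw [hvq, h, uQ_two2])
  have hx2 : x ≠ negtwo2 := by
    intro h; exact hw.2 (by rw [hvq, h, uQ_negtwo2])
  rcases hKEY x hx with h | h | ⟨g, hg, hne⟩
  · exact hx1 h
  · exact hx2 h
  have hgm : mkU g hg ∈ binaryOctahedralGroup := memB g hg
  set gB : BO := ⟨mkU g hg, hgm⟩ with hgB
  set gT : ↥(⊤ : Subgroup BO) := ⟨gB, Subgroup.mem_top _⟩ with hgT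
  have hconj : gT * w.1 * gT⁻¹ ∈ A := hnorm.conj_mem w.1 w.2 gT
  have hcomm' : (gT * w.1 * gT⁻¹) * w.1 = w.1 * (gT * w.1 * gT⁻¹) :=
    congrArg Subtype.val (habel ⟨_, hconj⟩ w)
  have hcomm2 : (gB * w.1.1 * gB⁻¹) * w.1.1 = w.1.1 * (gB * w.1.1 * gB⁻¹) :=
    congrArg Subtype.val hcomm'
  have hcomm4 : (uQ g * uQ x * star (uQ g)) * uQ x = uQ x * (uQ g * uQ x * star (uQ g)) := by
    have h4 : (uQ g * qval w.1.1 * star (uQ g)) * qval w.1.1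
        = qval w.1.1 * (uQ g * qval w.1.1 * star (uQ g)) :=
      congrArg Subtype.val (congrArg Subtype.val hcomm2)
    rwa [hvq] at h4
  apply hne
  apply uQ_injective
  apply smul8
  have lhs8 : ((8:ℝ)⁻¹) • uQ (g * x * star g * x) = (uQ g * uQ x * star (uQ g)) * uQ x := by
    simp only [← uQ_star, uQ_mul_raw, smul_mul_assoc, mul_smul_comm, smul_smul]
    norm_num
  have rhs8 : ((8:ℝ)⁻¹) • uQ (x * (g * x * star g)) = uQ x * (uQ g * uQ x * star (uQ g)) := by
    simp only [← uQ_star, uQ_mul_raw, smul_mul_assoc, mul_smul_comm, smul_smul]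
    norm_num
  rw [lhs8, rhs8]
  exact hcomm4

/-- The binary octahedral group (of order 48) has Jordan constant `24`. -/
theorem jordanConstant_binaryOctahedral :
    Nat.card binaryOctahedralGroup = 48 ∧ jordanConstant binaryOctahedralGroup = 24 := by
  refine ⟨card_B, ?_⟩
  have hmem : 24 ∈ {d : ℕ | 0 < d ∧ IsJordanWith BO d} := ⟨by norm_num, upper⟩
  exact le_antisymm (Nat.sInf_le hmem) (le_csInf ⟨24, hmem⟩ (fun b hb => lower b hb.1 hb.2))
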